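/- Let (X,d) be a nonempty compact metric space and f : X → X a continuous map. Then: (i) for all 0 < α < α', the closure of 𝓡_α is contained in 𝓡_{α'}; (ii) each closure(𝓡_α) is a nonempty compact set, the chain recurrent set 𝓡 satisfies 𝓡 = ⋂_{α>0} closure(𝓡_α), and 𝓡 is nonempty and compact; and (iii) the Hausdorff distance d_H(closure(𝓡_α), 𝓡) tends to 0 as α → 0⁺. -/
import Mathlib


/-- An ε-chain from `y` to `z` for the map `f`: a finite sequence
`y = c 0, c 1, …, c m = z` with `m ≥ 1` (i.e. at least two points) and
`dist (f (c k)) (c (k+1)) < ε` for all `k < m`. -/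
def EpsChain {X : Type*} [MetricSpace X] (f : X → X) (ε : ℝ) (y z : X) : Prop :=
  ∃ m : ℕ, 1 ≤ m ∧ ∃ c : ℕ → X, c 0 = y ∧ c m = z ∧ ∀ k < m, dist (f (c k)) (c (k + 1)) < ε

/-- The set `𝓡_ε` of ε-chain recurrent points of `f`. -/
def chainRecSet {X : Type*} [MetricSpace X] (f : X → X) (ε : ℝ) : Set X :=
  {y | EpsChain f ε y y}

lemma chainRecSet_mono {X : Type*} [MetricSpace X] (f : X → X) {ε ε' : ℝ} (h : ε ≤ ε') :
    chainRecSet f ε ⊆ chainRecSet f ε' := by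
  rintro y ⟨m, hm, c, h0, hm', hc⟩
  exact ⟨m, hm, c, h0, hm', fun k hk => lt_of_lt_of_le (hc k hk) h⟩

lemma closure_chainRecSet_subset {X : Type*} [MetricSpace X] (f : X → X) (hf : Continuous f)
    {α α' : ℝ} (hα : 0 < α) (h : α < α') :
    closure (chainRecSet f α) ⊆ chainRecSet f α' := by
  intro y hy
  set ε := (α' - α) / 2 with hε
  have hεpos : 0 < ε := by rw [hε]; linarith
  obtain ⟨δ, hδpos, hδ⟩ := Metric.continuous_iff.1 hf y ε hεpos
  obtain ⟨x, hxR, hxy⟩ := Metric.mem_closure_iff.1 hy (min δ ε) (lt_min hδpos hεpos)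
  -- hxy : dist y x < min δ ε
  obtain ⟨m, hm, c, h0, hmx, hc⟩ := hxR
  have hdyx : dist y x < ε := lt_of_lt_of_le hxy (min_le_right _ _)
  have hdfy : dist (f x) (f y) < ε := by
    have : dist x y < δ := by rw [dist_comm]; exact lt_of_lt_of_le hxy (min_le_left _ _)
    exact hδ x this
  refine ⟨m, hm, fun k => if k = 0 ∨ k = m then y else c k, by simp, by simp, ?_⟩
  intro k hk
  dsimp only
  have hkm : ¬ (k = m) := Nat.ne_of_lt hk
  rcases Nat.eq_zero_or_pos k with hk0 | hkpos
  · subst hk0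
    simp only [true_or, if_pos]
    rcases eq_or_lt_of_le hm with hm1 | hm2
    · -- m = 1, the step is from y to y
      have h1m : (0:ℕ) + 1 = m := by omega
      rw [if_pos (Or.inr h1m)]
      have hstep : dist (f (c 0)) (c 1) < α := hc 0 (by omega)
      rw [h0] at hstep
      have hc1 : c 1 = x := by rw [show (1:ℕ) = m by omega, hmx]
      rw [hc1] at hstep
      calc dist (f y) y ≤ dist (f y) (f x) + dist (f x) x + dist x y := dist_triangle4 _ _ _ _
        _ < ε + α + ε := by
            have := hdfy; rw [dist_comm] at this hdyx
            exact add_lt_add (add_lt_add this hstep) hdyx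
        _ = α' := by rw [hε]; ring
    · have h1m : ¬ ((0:ℕ) + 1 = 0 ∨ (0:ℕ) + 1 = m) := by omega
      rw [if_neg h1m]
      have hstep : dist (f (c 0)) (c 1) < α := hc 0 (by omega)
      rw [h0] at hstep
      calc dist (f y) (c 1) ≤ dist (f y) (f x) + dist (f x) (c 1) := dist_triangle _ _ _
        _ < ε + α := by rw [dist_comm] at hdfy; exact add_lt_add hdfy hstep
        _ < α' := by rw [hε]; linarith
  · have hknot : ¬ (k = 0 ∨ k = m) := by omega
    rw [if_neg hknot]
    rcases eq_or_lt_of_le (Nat.succ_le_of_lt hk) with hlast | hmid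
    · -- k + 1 = m
      have hlast' : k + 1 = m := hlast
      rw [if_pos (Or.inr hlast')]
      have hstep : dist (f (c k)) (c (k+1)) < α := hc k hk
      rw [hlast', hmx] at hstep
      calc dist (f (c k)) y ≤ dist (f (c k)) x + dist x y := dist_triangle _ _ _
        _ < α + ε := by rw [dist_comm] at hdyx; exact add_lt_add hstep hdyx
        _ < α' := by rw [hε]; linarith
    · have : ¬ (k + 1 = 0 ∨ k + 1 = m) := by omega
      rw [if_neg this]
      exact lt_trans (hc k hk) h

lemma chainRecSet_nonempty {X : Type*} [MetricSpace X] [CompactSpace X] [Nonempty X]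
    (f : X → X) {α : ℝ} (hα : 0 < α) : (chainRecSet f α).Nonempty := by
  obtain ⟨x⟩ := ‹Nonempty X›
  obtain ⟨p, -, φ, hφ, hlim⟩ := isCompact_univ.tendsto_subseq
    (x := fun n => f^[n] x) (fun n => Set.mem_univ _)
  have := Metric.tendsto_atTop.1 hlim (α/2) (by positivity)
  obtain ⟨N, hN⟩ := this
  set n := φ N
  set m := φ (N+1)
  have hnm : n < m := hφ (Nat.lt_succ_self N)
  have hd : dist (f^[m] x) (f^[n] x) < α := by
    have h1 := hN N (le_refl N)
    have h2 := hN (N+1) (Nat.le_succ N)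
    simp only [Function.comp_apply] at h1 h2
    calc dist (f^[m] x) (f^[n] x) ≤ dist (f^[m] x) p + dist p (f^[n] x) := dist_triangle _ _ _
      _ < α/2 + α/2 := by rw [dist_comm p]; exact add_lt_add h2 h1
      _ = α := by ring
  refine ⟨f^[n] x, m - n, by omega, fun k => if k = m - n then f^[n] x else f^[n+k] x, ?_, ?_, ?_⟩
  · dsimp only
    rw [if_neg (by omega), Nat.add_zero]
  · dsimp only
    rw [if_pos rfl]
  · intro k hk
    dsimp only
    rw [if_neg (by omega)]
    rcases eq_or_lt_of_le (Nat.succ_le_of_lt hk) with hlast | hmid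
    · have hlast' : k + 1 = m - n := hlast
      rw [if_pos hlast']
      have h2 : f (f^[n+k] x) = f^[n+k+1] x := (Function.iterate_succ_apply' f (n+k) x).symm
      rw [h2, show n + k + 1 = m by omega]
      exact hd
    · rw [if_neg (by omega)]
      have h2 : f (f^[n+k] x) = f^[n+(k+1)] x := by
        rw [show n + (k+1) = (n+k) + 1 by omega]
        exact (Function.iterate_succ_apply' f (n+k) x).symm
      rw [h2]
      simpa using hα

/-- for a continuous self-map of a nonempty compact metric space:
(i) `closure 𝓡_α ⊆ 𝓡_{α'}` for `0 < α < α'`;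
(ii) each `closure 𝓡_α` is nonempty and compact, `𝓡 = ⋂_{α>0} closure 𝓡_α`, and `𝓡`
is nonempty and compact;
(iii) `d_H(closure 𝓡_α, 𝓡) → 0` as `α → 0⁺`. -/
theorem stmt_14 {X : Type*} [MetricSpace X] [CompactSpace X] [Nonempty X]
    (f : X → X) (hf : Continuous f) :
    (∀ α α' : ℝ, 0 < α → α < α' → closure (chainRecSet f α) ⊆ chainRecSet f α') ∧
    (∀ α : ℝ, 0 < α →
      (closure (chainRecSet f α)).Nonempty ∧ IsCompact (closure (chainRecSet f α))) ∧
    (⋂ ε > (0 : ℝ), chainRecSet f ε) = (⋂ α > (0 : ℝ), closure (chainRecSet f α)) ∧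
    (⋂ ε > (0 : ℝ), chainRecSet f ε).Nonempty ∧
    IsCompact (⋂ ε > (0 : ℝ), chainRecSet f ε) ∧
    Filter.Tendsto
      (fun α : ℝ =>
        Metric.hausdorffDist (closure (chainRecSet f α)) (⋂ ε > (0 : ℝ), chainRecSet f ε))
      (nhdsWithin 0 (Set.Ioi 0)) (nhds 0) := by

  set R : Set X := ⋂ ε > (0 : ℝ), chainRecSet f ε with hR
  set V : ℕ → Set X := fun n => closure (chainRecSet f (1 / (n + 1))) with hV
  have hVpos : ∀ n : ℕ, (0:ℝ) < 1 / (n + 1) := fun n => by positivity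
  -- equality with intersection of closures
  have hEq : R = ⋂ α > (0 : ℝ), closure (chainRecSet f α) := by
    apply Set.Subset.antisymm
    · intro y hy
      simp only [hR, Set.mem_iInter] at hy ⊢
      exact fun α hα => subset_closure (hy α hα)
    · intro y hy
      simp only [Set.mem_iInter, hR] at hy ⊢
      intro ε hε
      exact closure_chainRecSet_subset f hf (by linarith : (0:ℝ) < ε/2)
        (by linarith) (hy (ε/2) (by linarith))
  have hEqV : R = ⋂ n : ℕ, V n := by
    apply Set.Subset.antisymm
    · rw [hEq]
      intro y hy
      simp only [Set.mem_iInter] at hy ⊢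
      exact fun n => hy _ (hVpos n)
    · intro y hy
      simp only [Set.mem_iInter, hR] at hy ⊢
      intro ε hε
      obtain ⟨n, hn⟩ := exists_nat_one_div_lt hε
      exact closure_chainRecSet_subset f hf (hVpos n) hn (hy n)
  have hVclosed : ∀ n, IsClosed (V n) := fun n => isClosed_closure
  have hVmono : ∀ n : ℕ, V (n + 1) ⊆ V n := by
    intro n
    apply closure_mono
    apply chainRecSet_mono
    apply one_div_le_one_div_of_le (by positivity)
    push_cast; linarith
  have hVne : ∀ n, (V n).Nonempty := fun n =>
    (chainRecSet_nonempty f (hVpos n)).mono subset_closure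
  have hRne : R.Nonempty := by
    rw [hEqV]
    exact IsCompact.nonempty_iInter_of_sequence_nonempty_isCompact_isClosed V hVmono hVne
      ((hVclosed 0).isCompact) hVclosed
  have hRclosed : IsClosed R := by
    rw [hEq]
    exact isClosed_biInter fun α _ => isClosed_closure
  refine ⟨fun α α' hα hαα' => closure_chainRecSet_subset f hf hα hαα',
    fun α hα => ⟨(chainRecSet_nonempty f hα).mono subset_closure,
      isClosed_closure.isCompact⟩, hEq, hRne, hRclosed.isCompact, ?_⟩
  rw [Metric.tendsto_nhds]
  intro δ hδ
  -- find n with V n ⊆ thickening (δ/2) R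
  have hkey : ∃ n : ℕ, V n ⊆ Metric.thickening (δ/2) R := by
    by_contra hcon
    push_neg at hcon
    have hC : (⋂ n : ℕ, V n ∩ (Metric.thickening (δ/2) R)ᶜ).Nonempty := by
      apply IsCompact.nonempty_iInter_of_sequence_nonempty_isCompact_isClosed
      · exact fun n => Set.inter_subset_inter_left _ (hVmono n)
      · intro n
        obtain ⟨x, hx1, hx2⟩ := Set.not_subset.1 (hcon n)
        exact ⟨x, hx1, hx2⟩
      · exact ((hVclosed 0).inter (Metric.isOpen_thickening.isClosed_compl)).isCompact
      · exact fun n => (hVclosed n).inter (Metric.isOpen_thickening.isClosed_compl)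
    obtain ⟨x, hx⟩ := hC
    simp only [Set.mem_iInter, Set.mem_inter_iff] at hx
    have hxR : x ∈ R := by
      rw [hEqV]
      exact Set.mem_iInter.2 fun n => (hx n).1
    exact (hx 0).2 (Metric.self_subset_thickening (by linarith) R hxR)
  obtain ⟨n, hn⟩ := hkey
  have hmem : Set.Ioc (0:ℝ) (1/(n+1)) ∈ nhdsWithin (0:ℝ) (Set.Ioi 0) :=
    Ioc_mem_nhdsGT_of_mem ⟨le_refl 0, hVpos n⟩
  filter_upwards [hmem] with α hα
  have hsub : closure (chainRecSet f α) ⊆ Metric.thickening (δ/2) R :=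
    (closure_mono (chainRecSet_mono f hα.2)).trans hn
  have hdist : Metric.hausdorffDist (closure (chainRecSet f α)) R ≤ δ/2 := by
    apply Metric.hausdorffDist_le_of_mem_dist (by linarith)
    · intro x hx
      obtain ⟨z, hz, hdz⟩ := Metric.mem_thickening_iff.1 (hsub hx)
      exact ⟨z, hz, hdz.le⟩
    · intro y hy
      refine ⟨y, ?_, by rw [dist_self]; linarith⟩
      apply subset_closure
      simp only [hR, Set.mem_iInter] at hy
      exact hy α hα.1
  have hnonneg : 0 ≤ Metric.hausdorffDist (closure (chainRecSet f α)) R :=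
    Metric.hausdorffDist_nonneg
  rw [Real.dist_eq, sub_zero, abs_of_nonneg hnonneg]
  linarith
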